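/- Let ν be a measure on a separable metric space E that is finite on bounded sets. If there exists a constant c > 0 such that ν(f²) ≤ c·ν(|f|)² for all f ∈ L²(ν), then the support of ν is at most countable. -/

import Mathlib

open MeasureTheory Real

/-- The topological support of a measure: points all of whose open neighborhoods
have positive measure. -/
def measSupport {E : Type*} [TopologicalSpace E] [MeasurableSpace E]
    (ν : Measure E) : Set E :=
  {x : E | ∀ U : Set E, IsOpen U → x ∈ U → 0 < ν U}

theorem stmt_2 {E : Type*} [MetricSpace E] [TopologicalSpace.SeparableSpace E]
    [MeasurableSpace E] [BorelSpace E] (ν : Measure E)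
    (hfin : ∀ s : Set E, Bornology.IsBounded s → ν s < ⊤)
    (c : ℝ) (hc : 0 < c)
    (hineq : ∀ f : E → ℝ, MeasureTheory.MemLp f 2 ν →
      ∫ x, f x ^ 2 ∂ν ≤ c * (∫ x, |f x| ∂ν) ^ 2) :
    (measSupport ν).Countable := by
  -- Step 1: any measurable set of positive finite measure has measure ≥ 1/c.
  have key : ∀ A : Set E, MeasurableSet A → ν A ≠ ⊤ → ν A ≠ 0 →
      ENNReal.ofReal (1 / c) ≤ ν A := by
    intro A hA hfinA hposA
    have hmem : MemLp (A.indicator (fun _ => (1 : ℝ))) 2 ν :=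
      memLp_indicator_const 2 hA (1 : ℝ) (Or.inr hfinA)
    have h := hineq _ hmem
    have hsq : ∀ x, (A.indicator (fun _ => (1 : ℝ)) x) ^ 2
        = A.indicator (fun _ => (1 : ℝ)) x := by
      intro x
      by_cases hx : x ∈ A <;> simp [Set.indicator_apply, hx]
    have habs : ∀ x, |A.indicator (fun _ => (1 : ℝ)) x|
        = A.indicator (fun _ => (1 : ℝ)) x := by
      intro x
      by_cases hx : x ∈ A <;> simp [Set.indicator_apply, hx]
    simp only [hsq, habs] at h
    have hint : ∫ x, A.indicator (fun _ => (1 : ℝ)) x ∂ν = (ν A).toReal := by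
      rw [integral_indicator_const (1 : ℝ) hA]; simp [Measure.real]
    rw [hint] at h
    have htpos : 0 < (ν A).toReal :=
      ENNReal.toReal_pos hposA hfinA
    have h1 : 1 ≤ c * (ν A).toReal := by
      have := h
      nlinarith [sq_nonneg ((ν A).toReal)]
    have h2 : 1 / c ≤ (ν A).toReal := by
      rw [div_le_iff₀ hc] at *
      nlinarith
    calc ENNReal.ofReal (1 / c) ≤ ENNReal.ofReal ((ν A).toReal) :=
          ENNReal.ofReal_le_ofReal h2
      _ = ν A := ENNReal.ofReal_toReal hfinA
  -- Step 2: every support point is an atom of mass ≥ 1/c.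
  have atom : ∀ x ∈ measSupport ν, ENNReal.ofReal (1 / c) ≤ ν {x} := by
    intro x hx
    have hball : ∀ n : ℕ, ENNReal.ofReal (1 / c) ≤ ν (Metric.closedBall x (1 / (n + 1))) := by
      intro n
      have hrpos : (0 : ℝ) < 1 / (n + 1) := by positivity
      have hbdd : ν (Metric.closedBall x (1 / (n + 1))) ≠ ⊤ :=
        (hfin _ Metric.isBounded_closedBall).ne
      have hpos : ν (Metric.closedBall x (1 / (n + 1))) ≠ 0 := by
        have h1 := hx (Metric.ball x (1 / (n + 1))) Metric.isOpen_ball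
          (Metric.mem_ball_self hrpos)
        have hle : ν (Metric.ball x (1 / (n + 1))) ≤ ν (Metric.closedBall x (1 / (n + 1))) :=
          measure_mono Metric.ball_subset_closedBall
        exact (lt_of_lt_of_le h1 hle).ne'
      exact key _ measurableSet_closedBall hbdd hpos
    have hInter : ⋂ n : ℕ, Metric.closedBall x (1 / (n + 1)) = {x} := by
      ext y
      simp only [Set.mem_iInter, Metric.mem_closedBall, Set.mem_singleton_iff]
      constructor
      · intro h
        have : dist y x ≤ 0 := by
          by_contra hlt
          push_neg at hlt
          obtain ⟨n, hn⟩ := exists_nat_gt (1 / dist y x)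
          have hn' : 1 / (n + 1 : ℝ) < dist y x := by
            rw [div_lt_iff₀ (by positivity)]
            rw [div_lt_iff₀ hlt] at hn
            nlinarith
          exact absurd (h n) (not_le.mpr hn')
        exact dist_le_zero.mp this
      · intro h; subst h; intro n; simp; positivity
    have htend : Filter.Tendsto (fun n : ℕ => ν (Metric.closedBall x (1 / (n + 1))))
        Filter.atTop (nhds (ν (⋂ n : ℕ, Metric.closedBall x (1 / (n + 1))))) := by
      apply tendsto_measure_iInter_atTop
      · exact fun n => measurableSet_closedBall.nullMeasurableSet
      · intro m n hmn
        apply Metric.closedBall_subset_closedBall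
        apply div_le_div_of_nonneg_left one_pos.le (by positivity)
        have : (m : ℝ) ≤ n := Nat.cast_le.mpr hmn
        linarith
      · exact ⟨0, (hfin _ Metric.isBounded_closedBall).ne⟩
    rw [hInter] at htend
    exact ge_of_tendsto' htend hball
  -- Step 3: cover E by countably many balls; in each, atoms of mass ≥ 1/c are countable.
  obtain ⟨s, hs_count, hs_dense⟩ := TopologicalSpace.exists_countable_dense E
  have hcover : measSupport ν ⊆ ⋃ y ∈ s, (measSupport ν ∩ Metric.ball y 1) := by
    intro x hx
    obtain ⟨y, hyb, hys⟩ := Metric.dense_iff.mp hs_dense x 1 one_pos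
    exact Set.mem_biUnion hys ⟨hx, Metric.mem_ball'.mp hyb⟩
  apply Set.Countable.mono hcover
  apply Set.Countable.biUnion hs_count
  intro y _
  have hcnt : Set.Countable {x : E | 0 < ν ({x} ∩ Metric.ball y 1)} := by
    apply Measure.countable_meas_pos_of_disjoint_of_meas_iUnion_ne_top ν
      (As := fun x : E => {x} ∩ Metric.ball y 1)
    · exact fun x => (measurableSet_singleton x).inter Metric.isOpen_ball.measurableSet
    · intro a b hab
      simp only [Function.onFun]
      exact Set.disjoint_of_subset Set.inter_subset_left Set.inter_subset_left
        (by simpa [Set.disjoint_singleton] using hab)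
    · refine ne_top_of_le_ne_top (hfin (Metric.ball y 1) Metric.isBounded_ball).ne
        (measure_mono (Set.iUnion_subset fun x => Set.inter_subset_right))
  apply hcnt.mono
  intro x hx
  have hx1 : x ∈ measSupport ν := hx.1
  have hx2 : x ∈ Metric.ball y 1 := hx.2
  have : ({x} : Set E) ∩ Metric.ball y 1 = {x} := by
    rw [Set.inter_eq_left]; simpa using hx2
  simp only [Set.mem_setOf_eq, this]
  calc (0 : ENNReal) < ENNReal.ofReal (1 / c) := by
        simp [ENNReal.ofReal_pos]; positivity
    _ ≤ ν {x} := atom x hx1
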